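/- Let (σ,τ) be a persistence pair of base simplices in the cone filtration with min σ = b < d = min τ (low R[τ] = σ). Then the relative cycle ẑ produced by Lift-Cycle(V[τ], (d,b), 0) is an apex representative in H(K̂(b,d]): [ẑ] lies neither in the image of H(K̂(b−1,d]) → H(K̂(b,d]) nor in the image of H(K̂(b,d−1]) → H(K̂(b,d]). -/

import Mathlib

open Finsupp
open scoped Classical

/-- A finite Δ-complex over a field `F`: each cell has a dimension, a boundary chain,
and an integer support interval `T(σ) = [tmin σ, tmax σ] ⊆ [0, n]`; whenever `σ` appears
in `∂τ` one has `tmin σ < tmin τ < tmax τ < tmax σ`. -/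
structure DeltaComplex (F : Type) [Field F] (n : ℤ) where
  Cell : Type
  deq : DecidableEq Cell
  fin : Fintype Cell
  dim : Cell → ℕ
  tmin : Cell → ℤ
  tmax : Cell → ℤ
  bdry : Cell → (Cell →₀ F)
  tmin_nonneg : ∀ σ, 0 ≤ tmin σ
  tmin_lt_tmax : ∀ σ, tmin σ < tmax σ
  tmax_le : ∀ σ, tmax σ ≤ n
  bdry_dim : ∀ τ σ, bdry τ σ ≠ 0 → dim σ + 1 = dim τ
  nest : ∀ τ σ, bdry τ σ ≠ 0 → tmin σ < tmin τ ∧ tmax τ < tmax σ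
  bdry_bdry : ∀ τ, ((bdry τ).sum fun σ a => a • bdry σ) = 0

attribute [instance] DeltaComplex.deq DeltaComplex.fin

variable {F : Type} [Field F] {n : ℤ}

/-- The boundary of a chain of `K`. -/
noncomputable def bd (K : DeltaComplex F n) (c : K.Cell →₀ F) : K.Cell →₀ F :=
  c.sum fun τ a => a • K.bdry τ

/-- A chain is supported on a set of cells. -/
def SuppOn {α β : Type} [Zero β] (c : α →₀ β) (S : α → Prop) : Prop :=
  ∀ x, c x ≠ 0 → S x

/-- Cells of the prism `K̂`: vertical cells `σ×{i}` and horizontal cells `σ×[i,i+1]`. -/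
inductive PCell (C : Type) where
  | vert : C → ℤ → PCell C
  | horiz : C → ℤ → PCell C
deriving DecidableEq

/-- Membership of a prism cell in the prism `K̂`. -/
def inPrism (K : DeltaComplex F n) : PCell K.Cell → Prop
  | .vert σ i => K.tmin σ ≤ i ∧ i ≤ K.tmax σ
  | .horiz σ i => K.tmin σ ≤ i ∧ i + 1 ≤ K.tmax σ

/-- Membership of a prism cell in the interlevel subcomplex `K̂_i^j` (cells `σ×T` with
`T ⊆ [i,j]`). -/
def inSub (K : DeltaComplex F n) (i j : ℤ) : PCell K.Cell → Prop
  | .vert σ t => (K.tmin σ ≤ t ∧ t ≤ K.tmax σ) ∧ i ≤ t ∧ t ≤ j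
  | .horiz σ t => (K.tmin σ ≤ t ∧ t + 1 ≤ K.tmax σ) ∧ i ≤ t ∧ t + 1 ≤ j

/-- The boundary of a single prism cell: `∂(τ×i) = (∂τ)×i` and
`∂(σ×[i,i+1]) = σ×(i+1) − σ×i − (∂σ)×[i,i+1]`. -/
noncomputable def pcellBd (K : DeltaComplex F n) : PCell K.Cell → (PCell K.Cell →₀ F)
  | .vert τ i => (K.bdry τ).sum fun σ a => Finsupp.single (PCell.vert σ i) a
  | .horiz σ i =>
      Finsupp.single (PCell.vert σ (i + 1)) 1 - Finsupp.single (PCell.vert σ i) 1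
        - (K.bdry σ).sum fun ρ a => Finsupp.single (PCell.horiz ρ i) a

/-- The boundary of a prism chain. -/
noncomputable def pbd (K : DeltaComplex F n) (c : PCell K.Cell →₀ F) : PCell K.Cell →₀ F :=
  c.sum fun x a => a • pcellBd K x

/-- `z` is a relative cycle of the pair of subcomplexes `(A, B)` of the prism. -/
def RelCycle (K : DeltaComplex F n) (A B : PCell K.Cell → Prop)
    (z : PCell K.Cell →₀ F) : Prop :=
  SuppOn z A ∧ SuppOn (pbd K z) B

/-- The homology class `[z] ∈ H(A,B)` lies in the image of the map
`H(A',B') → H(A,B)` induced by the inclusion of pairs `(A',B') ⊆ (A,B)`: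
there is a relative cycle `α` of `(A',B')` homologous to `z` within `(A,B)`. -/
def InImg (K : DeltaComplex F n) (A' B' A B : PCell K.Cell → Prop)
    (z : PCell K.Cell →₀ F) : Prop :=
  ∃ α β γ : PCell K.Cell →₀ F,
    RelCycle K A' B' α ∧ SuppOn β A ∧ SuppOn γ B ∧ z = α + pbd K β + γ

/-- The vertical prism chain `w × t`. -/
noncomputable def vchain (K : DeltaComplex F n) (w : K.Cell →₀ F) (t : ℤ) :
    PCell K.Cell →₀ F :=
  w.sum fun σ a => Finsupp.single (PCell.vert σ t) a

/-- A valid choice of times for Lift-Cycle: for every simplex `τ` of `z` with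
`T(τ) ∩ [b,d] ≠ ∅`, the chosen time satisfies `t τ ∈ T(τ) ∩ [b,d]`. -/
def ValidTimes (K : DeltaComplex F n) (z : K.Cell →₀ F) (b d : ℤ) (t : K.Cell → ℤ) : Prop :=
  ∀ τ, z τ ≠ 0 → K.tmin τ ≤ d → b ≤ K.tmax τ →
    K.tmin τ ≤ t τ ∧ t τ ≤ K.tmax τ ∧ b ≤ t τ ∧ t τ ≤ d

/-- The chain `ẑ` produced by `Lift-Cycle(z, (s,f), w₀)` with the choice of times `t`
(here `b = min s f`, `d = max s f`): the sum of the vertical cells `⟨τ,z⟩·(τ×t_τ)` over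
simplices `τ` of `z` with `T(τ) ∩ [b,d] ≠ ∅`, plus horizontal cells `σ×[k,k+1]`
(oriented from `s` to `f`) whose coefficient is the running sum
`⟨σ,w₀⟩ + Σ ⟨τ,z⟩·⟨σ,∂τ⟩` over the cofaces `τ` whose time `t_τ` has already been passed
when traversing from `s` to `f`. -/
noncomputable def liftCycle (K : DeltaComplex F n) (z : K.Cell →₀ F) (s f : ℤ)
    (w0 : K.Cell →₀ F) (t : K.Cell → ℤ) : PCell K.Cell →₀ F :=
  (∑ τ ∈ z.support.filter (fun τ => K.tmin τ ≤ max s f ∧ min s f ≤ K.tmax τ),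
      Finsupp.single (PCell.vert τ (t τ)) (z τ))
  + ∑ σ : K.Cell, ∑ k ∈ Finset.Icc (min s f) (max s f - 1),
      Finsupp.single (PCell.horiz σ k)
        ((if s ≤ f then (1 : F) else -1) *
          (w0 σ +
            ∑ τ ∈ z.support.filter (fun τ =>
                (K.tmin τ ≤ max s f ∧ min s f ≤ K.tmax τ) ∧
                  (if s ≤ f then t τ ≤ k else k + 1 ≤ t τ)),
              z τ * (K.bdry τ) σ))

/-- Cells of the cone `K̄ = ω ∗ K`: base simplices, the cone vertex `ω`,
and cone simplices `σ̄ = ω ∗ σ`. -/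
inductive CCell (C : Type) where
  | base : C → CCell C
  | omega : CCell C
  | cone : C → CCell C
deriving DecidableEq

/-- Boundary of a single cell of the cone `K̄`:
`∂σ` for base simplices, `0` for `ω`, and `∂(ω∗σ) = σ − ω∗∂σ` (minus `ω` when `σ` is a
vertex) for cone simplices. -/
noncomputable def ccellBd (K : DeltaComplex F n) : CCell K.Cell → (CCell K.Cell →₀ F)
  | .base σ => (K.bdry σ).sum fun ρ a => Finsupp.single (CCell.base ρ) a
  | .omega => 0
  | .cone σ =>
      Finsupp.single (CCell.base σ) 1
        - (K.bdry σ).sum (fun ρ a => Finsupp.single (CCell.cone ρ) a)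
        - (if K.dim σ = 0 then Finsupp.single CCell.omega 1 else 0)

/-- The boundary of a chain of the cone `K̄`. -/
noncomputable def cbd (K : DeltaComplex F n) (c : CCell K.Cell →₀ F) : CCell K.Cell →₀ F :=
  c.sum fun x a => a • ccellBd K x

/-- The restriction `c ∩ K` of a cone chain to the base simplices, as a chain in `K`. -/
noncomputable def basePart (K : DeltaComplex F n) (c : CCell K.Cell →₀ F) : K.Cell →₀ F :=
  c.sum fun x a =>
    match x with
    | .base σ => Finsupp.single σ a
    | .omega => 0
    | .cone _ => 0

/-- The restriction `c ∩ (K̄ − K)` of a cone chain to the cells not in the base. -/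
noncomputable def conePart (K : DeltaComplex F n) (c : CCell K.Cell →₀ F) :
    CCell K.Cell →₀ F :=
  c.sum fun x a =>
    match x with
    | .base _ => 0
    | .omega => Finsupp.single CCell.omega a
    | .cone ρ => Finsupp.single (CCell.cone ρ) a

/-- The order of the cells of `K̄` in the cone filtration: base simplices by increasing
`min σ`, then `ω`, then cone simplices by decreasing `max σ`, ties broken consistently
so that every prefix is a subcomplex. -/
structure ConeOrder (K : DeltaComplex F n) where
  pos : CCell K.Cell → ℕ
  inj : Function.Injective pos
  base_lt_base : ∀ σ τ : K.Cell, K.tmin σ < K.tmin τ → pos (.base σ) < pos (.base τ)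
  base_lt_omega : ∀ σ : K.Cell, pos (.base σ) < pos .omega
  omega_lt_cone : ∀ σ : K.Cell, pos .omega < pos (.cone σ)
  cone_lt_cone : ∀ σ τ : K.Cell, K.tmax τ < K.tmax σ → pos (.cone σ) < pos (.cone τ)
  faces_first : ∀ x y, (ccellBd K x) y ≠ 0 → pos y < pos x

/-- `σ` is the pivot (lowest nonzero entry) of the column (chain) `c`. -/
def IsLow (K : DeltaComplex F n) (O : ConeOrder K) (c : CCell K.Cell →₀ F)
    (σ : CCell K.Cell) : Prop :=
  c σ ≠ 0 ∧ ∀ ρ, c ρ ≠ 0 → O.pos ρ ≤ O.pos σ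

/-- `R = DV` is a decomposition of the boundary matrix `D` of the cone filtration:
`V` is invertible upper-triangular and `R` is reduced (pivots of nonzero columns lie
in pairwise distinct rows). -/
structure IsReduction (K : DeltaComplex F n) (O : ConeOrder K)
    (R V : CCell K.Cell → (CCell K.Cell →₀ F)) : Prop where
  rdv : ∀ τ, R τ = cbd K (V τ)
  upper : ∀ τ ρ, (V τ) ρ ≠ 0 → O.pos ρ ≤ O.pos τ
  diag : ∀ τ, (V τ) τ ≠ 0
  reduced : ∀ τ τ' σ, τ ≠ τ' → IsLow K O (R τ) σ → ¬ IsLow K O (R τ') σ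

/-- One run of the lazy (standard left-to-right) reduction of the column of `τ`:
starting from a column `c` (with coefficient vector `v`), while the column is nonzero
and its pivot collides with the pivot of an earlier (already reduced) column, subtract
the appropriate scalar multiple of that column. -/
inductive LazyReduces (K : DeltaComplex F n) (O : ConeOrder K)
    (R V : CCell K.Cell → (CCell K.Cell →₀ F)) (τ : CCell K.Cell) :
    (CCell K.Cell →₀ F) → (CCell K.Cell →₀ F) →
      (CCell K.Cell →₀ F) → (CCell K.Cell →₀ F) → Prop
  | done (c v : CCell K.Cell →₀ F)
      (h : ∀ σ, IsLow K O c σ → ∀ τ', O.pos τ' < O.pos τ → ¬ IsLow K O (R τ') σ) :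
      LazyReduces K O R V τ c v c v
  | step (c v c' v' : CCell K.Cell →₀ F) (τ' σ : CCell K.Cell)
      (hlt : O.pos τ' < O.pos τ) (hc : IsLow K O c σ) (hr : IsLow K O (R τ') σ)
      (next : LazyReduces K O R V τ (c - (c σ / ((R τ') σ)) • R τ')
        (v - (c σ / ((R τ') σ)) • V τ') c' v') :
      LazyReduces K O R V τ c v c' v'

/-- `R = DV` is obtained by the lazy reduction: every column `R τ` (with coefficient
column `V τ`) is the result of the lazy reduction of the boundary column of `τ`,
columns being processed from left to right. -/
def IsLazyReduction (K : DeltaComplex F n) (O : ConeOrder K)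
    (R V : CCell K.Cell → (CCell K.Cell →₀ F)) : Prop :=
  ∀ τ, LazyReduces K O R V τ (ccellBd K τ) (Finsupp.single τ 1) (R τ) (V τ)


section Aux
variable {F : Type} [Field F] {n : ℤ} {ι κ μ : Type*}

/-- generic "matrix" chain map -/
noncomputable def chainHom (g : ι → (κ →₀ F)) : (ι →₀ F) →ₗ[F] (κ →₀ F) :=
  Finsupp.lsum F fun x => LinearMap.smulRight (LinearMap.id : F →ₗ[F] F) (g x)

lemma chainHom_apply (g : ι → (κ →₀ F)) (c : ι →₀ F) :
    chainHom g c = c.sum fun x a => a • g x := by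
  simp [chainHom, Finsupp.lsum_apply]

lemma chainHom_single (g : ι → (κ →₀ F)) (x : ι) (a : F) :
    chainHom g (Finsupp.single x a) = a • g x := by
  rw [chainHom_apply, Finsupp.sum_single_index]; simp

lemma chainHom_coeff (g : ι → (κ →₀ F)) (c : ι →₀ F) (y : κ) :
    chainHom g c y = c.sum fun x a => a * g x y := by
  rw [chainHom_apply, Finsupp.sum_apply]
  rfl

lemma bd_eq (K : DeltaComplex F n) (c : K.Cell →₀ F) : bd K c = chainHom K.bdry c := by
  rw [chainHom_apply]; rfl

lemma pbd_eq (K : DeltaComplex F n) (c : PCell K.Cell →₀ F) :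
    pbd K c = chainHom (pcellBd K) c := by
  rw [chainHom_apply]; rfl

lemma cbd_eq (K : DeltaComplex F n) (c : CCell K.Cell →₀ F) :
    cbd K c = chainHom (ccellBd K) c := by
  rw [chainHom_apply]; rfl

lemma sum_single_eq_mapDomain (h : ι → κ) (c : ι →₀ F) :
    (c.sum fun x a => Finsupp.single (h x) a) = Finsupp.mapDomain h c := rfl

end Aux

section Aux2
variable {F : Type} [Field F] {n : ℤ} {ι κ : Type*}

lemma mapD_apply (h : ι → κ) (hinj : Function.Injective h) (c : ι →₀ F) (x : ι) :
    (c.sum fun x a => Finsupp.single (h x) a) (h x) = c x := by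
  rw [sum_single_eq_mapDomain, Finsupp.mapDomain_apply hinj]

lemma mapD_ne (h : ι → κ) (c : ι →₀ F) (y : κ) (hy : ∀ x, h x ≠ y) :
    (c.sum fun x a => Finsupp.single (h x) a) y = 0 := by
  rw [sum_single_eq_mapDomain, Finsupp.mapDomain_notin_range]
  rintro ⟨x, rfl⟩; exact hy x rfl

lemma vert_inj {C : Type} (j : ℤ) : Function.Injective (fun σ : C => PCell.vert σ j) := by
  intro a b h; cases h; rfl

lemma horiz_inj {C : Type} (j : ℤ) : Function.Injective (fun σ : C => PCell.horiz σ j) := by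
  intro a b h; cases h; rfl

lemma base_inj {C : Type} : Function.Injective (fun σ : C => CCell.base σ) := by
  intro a b h; cases h; rfl

variable (K : DeltaComplex F n)

lemma pcellBd_vert_vert (π ρ : K.Cell) (j i : ℤ) :
    pcellBd K (.vert π j) (.vert ρ i) = if i = j then K.bdry π ρ else 0 := by
  show ((K.bdry π).sum fun σ a => Finsupp.single (PCell.vert σ j) a) _ = _
  rcases eq_or_ne i j with rfl | hne
  · rw [if_pos rfl]; exact mapD_apply _ (vert_inj i) _ ρ
  · rw [if_neg hne]; exact mapD_ne _ _ _ (by intro x h; cases h; exact hne rfl)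

lemma pcellBd_vert_horiz (π ρ : K.Cell) (j i : ℤ) :
    pcellBd K (.vert π j) (.horiz ρ i) = 0 := by
  show ((K.bdry π).sum fun σ a => Finsupp.single (PCell.vert σ j) a) _ = _
  exact mapD_ne _ _ _ (by intro x h; cases h)

lemma pcellBd_horiz_vert (π ρ : K.Cell) (k i : ℤ) :
    pcellBd K (.horiz π k) (.vert ρ i)
      = (if π = ρ ∧ k + 1 = i then (1:F) else 0) - (if π = ρ ∧ k = i then (1:F) else 0) := by
  show ((Finsupp.single (PCell.vert π (k+1)) 1 - Finsupp.single (PCell.vert π k) 1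
      - (K.bdry π).sum fun ρ a => Finsupp.single (PCell.horiz ρ k) a : PCell K.Cell →₀ F)) _ = _
  rw [Finsupp.sub_apply, Finsupp.sub_apply]
  rw [mapD_ne _ _ _ (by intro x h; cases h)]
  rw [Finsupp.single_apply, Finsupp.single_apply]
  simp only [PCell.vert.injEq]
  ring

lemma pcellBd_horiz_horiz (π ρ : K.Cell) (k j : ℤ) :
    pcellBd K (.horiz π k) (.horiz ρ j) = -(if j = k then K.bdry π ρ else 0) := by
  show ((Finsupp.single (PCell.vert π (k+1)) 1 - Finsupp.single (PCell.vert π k) 1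
      - (K.bdry π).sum fun ρ a => Finsupp.single (PCell.horiz ρ k) a : PCell K.Cell →₀ F)) _ = _
  rw [Finsupp.sub_apply, Finsupp.sub_apply]
  rw [Finsupp.single_eq_of_ne (by simp), Finsupp.single_eq_of_ne (by simp)]
  rcases eq_or_ne j k with rfl | hne
  · rw [if_pos rfl, mapD_apply _ (horiz_inj j) _ ρ]; ring
  · rw [if_neg hne, mapD_ne _ _ _ (by intro x h; cases h; exact hne rfl)]; ring

end Aux2

section Aux3
variable {F : Type} [Field F] {n : ℤ} {ι κ μ : Type*}

lemma chainHom_mapD (g : κ → (μ →₀ F)) (h : ι → κ) (c : ι →₀ F) :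
    chainHom g (c.sum fun x a => Finsupp.single (h x) a) = c.sum fun x a => a • g (h x) := by
  rw [map_finsuppSum]
  exact Finsupp.sum_congr fun x _ => chainHom_single g (h x) _

lemma finsupp_sum_sub {c : ι →₀ F} (f g : ι → F → (κ →₀ F)) :
    (c.sum fun x a => f x a - g x a) = c.sum f - c.sum g := by
  rw [Finsupp.sum, Finsupp.sum, Finsupp.sum, ← Finset.sum_sub_distrib]

variable (K : DeltaComplex F n)

lemma bdry2_zero (τ ρ : K.Cell) : ∑ π : K.Cell, K.bdry τ π * K.bdry π ρ = 0 := by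
  have h : ((K.bdry τ).sum fun σ a => a • K.bdry σ) ρ = 0 := by
    rw [K.bdry_bdry]; rfl
  rw [Finsupp.sum_apply, Finsupp.sum] at h
  calc ∑ π : K.Cell, K.bdry τ π * K.bdry π ρ
      = ∑ π ∈ (K.bdry τ).support, K.bdry τ π * K.bdry π ρ := by
        refine (Finset.sum_subset (Finset.subset_univ _) ?_).symm
        intro x _ hx
        rw [Finsupp.notMem_support_iff.mp hx, zero_mul]
    _ = 0 := by rw [← h]; exact Finset.sum_congr rfl fun x _ => by simp

lemma bd_bd (c : K.Cell →₀ F) : bd K (bd K c) = 0 := by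
  rw [bd_eq, bd_eq, chainHom_apply K.bdry c, map_finsuppSum, Finsupp.sum]
  apply Finset.sum_eq_zero; intro τ _
  rw [map_smul, chainHom_apply, K.bdry_bdry, smul_zero]

lemma pbd_pcellBd (x : PCell K.Cell) : pbd K (pcellBd K x) = 0 := by
  rw [pbd_eq]
  cases x with
  | vert π j =>
      show chainHom (pcellBd K)
        ((K.bdry π).sum fun σ a => Finsupp.single (PCell.vert σ j) a) = 0
      rw [chainHom_mapD]
      calc ((K.bdry π).sum fun σ a => a • pcellBd K (.vert σ j))
          = (K.bdry π).sum fun σ a =>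
              Finsupp.mapDomain (fun ρ => PCell.vert ρ j) (a • K.bdry σ) := by
            refine Finsupp.sum_congr fun σ _ => ?_
            rw [Finsupp.mapDomain_smul]
            rfl
        _ = Finsupp.mapDomain (fun ρ => PCell.vert ρ j)
              ((K.bdry π).sum fun σ a => a • K.bdry σ) := by
            rw [Finsupp.mapDomain_sum]
        _ = 0 := by rw [K.bdry_bdry, Finsupp.mapDomain_zero]
  | horiz σ i =>
      show chainHom (pcellBd K)
        (Finsupp.single (PCell.vert σ (i+1)) 1 - Finsupp.single (PCell.vert σ i) 1
          - (K.bdry σ).sum fun ρ a => Finsupp.single (PCell.horiz ρ i) a) = 0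
      rw [map_sub, map_sub, chainHom_single, chainHom_single, chainHom_mapD, one_smul, one_smul]
      have h3 : ((K.bdry σ).sum fun ρ a => a • pcellBd K (.horiz ρ i))
          = pcellBd K (.vert σ (i+1)) - pcellBd K (.vert σ i) := by
        have : ∀ ρ : K.Cell, ∀ a : F, a • pcellBd K (.horiz ρ i)
            = (Finsupp.single (PCell.vert ρ (i+1)) a - Finsupp.single (PCell.vert ρ i) a)
              - Finsupp.mapDomain (fun π => PCell.horiz π i) (a • K.bdry ρ) := by
          intro ρ a
          show a • (Finsupp.single (PCell.vert ρ (i+1)) 1 - Finsupp.single (PCell.vert ρ i) 1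
            - (K.bdry ρ).sum fun π s => Finsupp.single (PCell.horiz π i) s) = _
          rw [smul_sub, smul_sub, Finsupp.smul_single, Finsupp.smul_single,
            Finsupp.mapDomain_smul, sum_single_eq_mapDomain]
          simp
        calc ((K.bdry σ).sum fun ρ a => a • pcellBd K (.horiz ρ i))
            = (K.bdry σ).sum fun ρ a =>
                (Finsupp.single (PCell.vert ρ (i+1)) a - Finsupp.single (PCell.vert ρ i) a)
                - Finsupp.mapDomain (fun π => PCell.horiz π i) (a • K.bdry ρ) := by
              exact Finsupp.sum_congr fun ρ _ => this ρ _
          _ = (((K.bdry σ).sum fun ρ a => Finsupp.single (PCell.vert ρ (i+1)) a)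
                - (K.bdry σ).sum fun ρ a => Finsupp.single (PCell.vert ρ i) a)
              - (K.bdry σ).sum fun ρ a =>
                  Finsupp.mapDomain (fun π => PCell.horiz π i) (a • K.bdry ρ) := by
              rw [finsupp_sum_sub, finsupp_sum_sub]
          _ = pcellBd K (.vert σ (i+1)) - pcellBd K (.vert σ i) := by
              rw [← Finsupp.mapDomain_sum, K.bdry_bdry, Finsupp.mapDomain_zero,
                sub_zero]
              rfl
      rw [h3]
      show pcellBd K (.vert σ (i+1)) - pcellBd K (.vert σ i)
        - (pcellBd K (.vert σ (i+1)) - pcellBd K (.vert σ i)) = 0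
      abel

lemma pbd_add (c₁ c₂ : PCell K.Cell →₀ F) :
    pbd K (c₁ + c₂) = pbd K c₁ + pbd K c₂ := by
  rw [pbd_eq K (c₁ + c₂), map_add, pbd_eq K c₁, pbd_eq K c₂]

lemma pbd_pbd (c : PCell K.Cell →₀ F) : pbd K (pbd K c) = 0 := by
  rw [pbd_eq, pbd_eq, chainHom_apply (pcellBd K) c, map_finsuppSum, Finsupp.sum]
  apply Finset.sum_eq_zero; intro x _
  rw [map_smul]
  have := pbd_pcellBd K x
  rw [pbd_eq] at this
  rw [this, smul_zero]

end Aux3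

section Aux4
variable {F : Type} [Field F] {n : ℤ} {ι κ : Type*}

lemma exists_of_chainHom_ne {g : ι → (κ →₀ F)} {c : ι →₀ F} {y : κ}
    (h : chainHom g c y ≠ 0) : ∃ x, c x ≠ 0 ∧ g x y ≠ 0 := by
  by_contra hc
  push_neg at hc
  apply h
  rw [chainHom_coeff, Finsupp.sum]
  apply Finset.sum_eq_zero
  intro x hx
  rw [hc x (Finsupp.mem_support_iff.mp hx), mul_zero]

variable (K : DeltaComplex F n)

noncomputable def baseLift (c : K.Cell →₀ F) : CCell K.Cell →₀ F :=
  c.sum fun x a => Finsupp.single (CCell.base x) a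

lemma baseLift_base (c : K.Cell →₀ F) (ρ : K.Cell) : baseLift K c (.base ρ) = c ρ :=
  mapD_apply _ base_inj c ρ

lemma baseLift_omega (c : K.Cell →₀ F) : baseLift K c .omega = 0 :=
  mapD_ne _ _ _ (by intro x h; cases h)

lemma baseLift_cone (c : K.Cell →₀ F) (ρ : K.Cell) : baseLift K c (.cone ρ) = 0 :=
  mapD_ne _ _ _ (by intro x h; cases h)

lemma ccellBd_base (ρ : K.Cell) : ccellBd K (.base ρ) = baseLift K (K.bdry ρ) := rfl

lemma cbd_baseLift (c : K.Cell →₀ F) : cbd K (baseLift K c) = baseLift K (bd K c) := by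
  rw [cbd_eq, baseLift, chainHom_mapD]
  calc (c.sum fun ρ a => a • ccellBd K (.base ρ))
      = c.sum fun ρ a => Finsupp.mapDomain CCell.base (a • K.bdry ρ) := by
        refine Finsupp.sum_congr fun ρ _ => ?_
        rw [ccellBd_base, Finsupp.mapDomain_smul]
        rfl
    _ = Finsupp.mapDomain CCell.base (c.sum fun ρ a => a • K.bdry ρ) :=
        (Finsupp.mapDomain_sum).symm
    _ = baseLift K (bd K c) := rfl

lemma basePart_apply (c : CCell K.Cell →₀ F) (ρ : K.Cell) :
    basePart K c ρ = c (.base ρ) := by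
  rw [basePart, Finsupp.sum_apply, Finsupp.sum]
  rw [Finset.sum_eq_single (CCell.base ρ)]
  · simp
  · intro y _ hne
    cases y with
    | base π =>
        have : π ≠ ρ := by rintro rfl; exact hne rfl
        simp [Finsupp.single_eq_of_ne' this]
    | omega => rfl
    | cone _ => rfl
  · intro h
    rw [Finsupp.notMem_support_iff.mp h]
    simp

lemma eq_baseLift_of_baseSupported (c : CCell K.Cell →₀ F)
    (h : ∀ y, c y ≠ 0 → ∃ ρ, y = CCell.base ρ) : c = baseLift K (basePart K c) := by
  ext y
  cases y with
  | base ρ => rw [baseLift_base, basePart_apply]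
  | omega =>
      rw [baseLift_omega]
      by_contra h0
      obtain ⟨ρ, hρ⟩ := h _ h0
      cases hρ
  | cone π =>
      rw [baseLift_cone]
      by_contra h0
      obtain ⟨ρ, hρ⟩ := h _ h0
      cases hρ

lemma basePart_baseLift (c : K.Cell →₀ F) : basePart K (baseLift K c) = c := by
  ext ρ
  rw [basePart_apply, baseLift_base]

variable (O : ConeOrder K)

lemma tmin_le_of_pos_le {ρ π : K.Cell} (h : O.pos (.base ρ) ≤ O.pos (.base π)) :
    K.tmin ρ ≤ K.tmin π := by
  by_contra hc
  exact absurd (O.base_lt_base π ρ (by omega)) (by omega)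

variable (R V : CCell K.Cell → (CCell K.Cell →₀ F))

lemma Vcol_base (hRV : IsReduction K O R V) (x : K.Cell) :
    V (.base x) = baseLift K (basePart K (V (.base x))) := by
  apply eq_baseLift_of_baseSupported
  intro y hy
  have hle := hRV.upper _ _ hy
  cases y with
  | base ρ => exact ⟨ρ, rfl⟩
  | omega => exact absurd (O.base_lt_omega x) (by omega)
  | cone ρ => exact absurd (lt_trans (O.base_lt_omega x) (O.omega_lt_cone ρ)) (by omega)

lemma Rcol_base (hRV : IsReduction K O R V) (x : K.Cell) :
    R (.base x) = baseLift K (bd K (basePart K (V (.base x)))) := by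
  rw [hRV.rdv, Vcol_base K O R V hRV x, cbd_baseLift, basePart_baseLift]

end Aux4

section Lift
variable {F : Type} [Field F] {n : ℤ}
variable (K : DeltaComplex F n) (z : K.Cell →₀ F) (b d : ℤ) (t : K.Cell → ℤ)

/-- simplices of `z` with support interval meeting `[b,d]` (given `tmin ≤ d`). -/
noncomputable def lcS : Finset K.Cell :=
  z.support.filter fun τ' => K.tmin τ' ≤ d ∧ b ≤ K.tmax τ'

/-- running sums of Lift-Cycle. -/
noncomputable def lcT (m : ℤ) (ρ : K.Cell) : F :=
  ∑ τ' ∈ z.support.filter (fun τ' => (K.tmin τ' ≤ d ∧ b ≤ K.tmax τ') ∧ m ≤ t τ'),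
    z τ' * K.bdry τ' ρ

/-- the boundary of the part of `z` with support meeting `[b,d]`. -/
noncomputable def lcW : K.Cell →₀ F :=
  bd K (z.filter fun τ' => K.tmin τ' ≤ d ∧ b ≤ K.tmax τ')

lemma vchain_vert (w : K.Cell →₀ F) (m : ℤ) (ρ : K.Cell) (i : ℤ) :
    vchain K w m (.vert ρ i) = if i = m then w ρ else 0 := by
  rcases eq_or_ne i m with rfl | hne
  · rw [if_pos rfl]; exact mapD_apply _ (vert_inj i) _ ρ
  · rw [if_neg hne]
    exact mapD_ne _ _ _ (by intro x h; cases h; exact hne rfl)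

lemma vchain_horiz (w : K.Cell →₀ F) (m : ℤ) (ρ : K.Cell) (j : ℤ) :
    vchain K w m (.horiz ρ j) = 0 :=
  mapD_ne _ _ _ (by intro x h; cases h)

lemma lcW_apply (ρ : K.Cell) :
    lcW K z b d ρ = ∑ τ' ∈ lcS K z b d, z τ' * K.bdry τ' ρ := by
  rw [lcW, bd_eq, chainHom_coeff, Finsupp.sum, Finsupp.support_filter, lcS]
  refine Finset.sum_congr rfl fun x hx => ?_
  rw [Finsupp.filter_apply_pos]
  exact (Finset.mem_filter.mp hx).2

lemma lcT_filter (m : ℤ) (ρ : K.Cell) :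
    lcT K z b d t m ρ
      = ∑ τ' ∈ lcS K z b d, (if m ≤ t τ' then z τ' * K.bdry τ' ρ else 0) := by
  have h : z.support.filter (fun τ' => (K.tmin τ' ≤ d ∧ b ≤ K.tmax τ') ∧ m ≤ t τ')
      = (lcS K z b d).filter (fun τ' => m ≤ t τ') := by
    rw [lcS, Finset.filter_filter]
  rw [lcT, h, Finset.sum_filter]

lemma lcT_sub (m : ℤ) (ρ : K.Cell) :
    lcT K z b d t m ρ - lcT K z b d t (m+1) ρ
      = ∑ τ' ∈ lcS K z b d, (if t τ' = m then z τ' * K.bdry τ' ρ else 0) := by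
  rw [lcT_filter, lcT_filter, ← Finset.sum_sub_distrib]
  refine Finset.sum_congr rfl fun x _ => ?_
  split_ifs
  all_goals try ring
  all_goals (exfalso; omega)

lemma mem_lcS {x : K.Cell} (hx : x ∈ lcS K z b d) :
    z x ≠ 0 ∧ K.tmin x ≤ d ∧ b ≤ K.tmax x := by
  simp only [lcS, Finset.mem_filter, Finsupp.mem_support_iff] at hx
  exact ⟨hx.1, hx.2.1, hx.2.2⟩

lemma lcT_full (ht : ValidTimes K z b d t) {m : ℤ} (hm : m ≤ b) (ρ : K.Cell) :
    lcT K z b d t m ρ = ∑ τ' ∈ lcS K z b d, z τ' * K.bdry τ' ρ := by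
  rw [lcT_filter]
  refine Finset.sum_congr rfl fun x hx => ?_
  obtain ⟨hz, h1, h2⟩ := mem_lcS K z b d hx
  have := ht x hz h1 h2
  rw [if_pos (by omega)]

lemma lcT_zero (ht : ValidTimes K z b d t) {m : ℤ} (hm : d + 1 ≤ m) (ρ : K.Cell) :
    lcT K z b d t m ρ = 0 := by
  rw [lcT_filter]
  refine Finset.sum_eq_zero fun x hx => ?_
  obtain ⟨hz, h1, h2⟩ := mem_lcS K z b d hx
  have := ht x hz h1 h2
  rw [if_neg (by omega)]

lemma lcT_full_of_tmin (ht : ValidTimes K z b d t) {m : ℤ} (ρ : K.Cell)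
    (hm : m ≤ K.tmin ρ + 1) :
    lcT K z b d t m ρ = ∑ τ' ∈ lcS K z b d, z τ' * K.bdry τ' ρ := by
  rw [lcT_filter]
  refine Finset.sum_congr rfl fun x hx => ?_
  obtain ⟨hz, h1, h2⟩ := mem_lcS K z b d hx
  by_cases hb : K.bdry x ρ = 0
  · rw [hb, mul_zero]
    simp
  · have hnest := K.nest x ρ hb
    have hts := ht x hz h1 h2
    rw [if_pos (by omega)]

lemma liftCycle_eq (hbd : b < d) :
    liftCycle K z d b 0 t
      = (∑ τ' ∈ lcS K z b d, Finsupp.single (PCell.vert τ' (t τ')) (z τ'))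
        + ∑ ρ : K.Cell, ∑ k ∈ Finset.Icc b (d-1),
            Finsupp.single (PCell.horiz ρ k) (- lcT K z b d t (k+1) ρ) := by
  have hmax : max d b = d := max_eq_left hbd.le
  have hmin : min d b = b := min_eq_right hbd.le
  have hif : ¬ (d ≤ b) := not_le.mpr hbd
  simp only [liftCycle, hmax, hmin, hif, if_false, Finsupp.coe_zero, Pi.zero_apply,
    zero_add, neg_one_mul, lcS, lcT]

end Lift

section Lift2
variable {F : Type} [Field F] {n : ℤ}
variable (K : DeltaComplex F n) (z : K.Cell →₀ F) (b d : ℤ) (t : K.Cell → ℤ)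

lemma keyAlg {F : Type} [Field F] (b d i : ℤ) (hbd : b < d) (T : ℤ → F) (W : F)
    (hW : W = T b) (hfull : ∀ m, m ≤ b → T m = T b) (hzero : ∀ m, d+1 ≤ m → T m = 0) :
    (T i - T (i+1)) + ((if b ≤ i-1 ∧ i-1 ≤ d-1 then -(T i) else 0)
      - (if b ≤ i ∧ i ≤ d-1 then -(T (i+1)) else 0)) = if i = b then W else 0 := by
  split_ifs with h1 h2 h3 h4 h5 h6 h7 h8 h9 h10 h11 h12
  all_goals try (exfalso; omega)
  · ring
  · rw [hzero (i+1) (by omega)]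
    ring
  · rw [hW]
    have hib : i = b := by omega
    rw [hib]
    ring
  · by_cases hlow : i + 1 ≤ b
    · rw [hfull i (by omega), hfull (i+1) (by omega)]
      ring
    · rw [hzero i (by omega), hzero (i+1) (by omega)]
      ring

lemma zhat_vert (hbd : b < d) (ρ : K.Cell) (i : ℤ) :
    liftCycle K z d b 0 t (.vert ρ i)
      = if ρ ∈ lcS K z b d ∧ t ρ = i then z ρ else 0 := by
  rw [liftCycle_eq K z b d t hbd, Finsupp.add_apply]
  have h2 : (∑ π : K.Cell, ∑ k ∈ Finset.Icc b (d-1),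
      Finsupp.single (PCell.horiz π k) (- lcT K z b d t (k+1) π)) (PCell.vert ρ i) = 0 := by
    rw [Finsupp.finset_sum_apply]
    refine Finset.sum_eq_zero fun π _ => ?_
    rw [Finsupp.finset_sum_apply]
    refine Finset.sum_eq_zero fun k _ => ?_
    exact Finsupp.single_eq_of_ne (by simp)
  rw [h2, add_zero, Finsupp.finset_sum_apply]
  by_cases hρ : ρ ∈ lcS K z b d
  · rw [Finset.sum_eq_single_of_mem ρ hρ]
    · rw [Finsupp.single_apply]
      by_cases hti : t ρ = i
      · subst hti
        rw [if_pos rfl, if_pos ⟨hρ, rfl⟩]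
      · rw [if_neg (show ¬ (PCell.vert ρ (t ρ) = PCell.vert ρ i) by simp [hti]),
          if_neg (by simp [hti])]
    · intro π _ hne
      exact Finsupp.single_eq_of_ne' (by simp [hne])
  · rw [if_neg (by simp [hρ])]
    refine Finset.sum_eq_zero fun π hπ => ?_
    have : π ≠ ρ := fun h => hρ (h ▸ hπ)
    exact Finsupp.single_eq_of_ne' (by simp [this])

lemma zhat_horiz (hbd : b < d) (ρ : K.Cell) (j : ℤ) :
    liftCycle K z d b 0 t (.horiz ρ j)
      = if j ∈ Finset.Icc b (d-1) then - lcT K z b d t (j+1) ρ else 0 := by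
  rw [liftCycle_eq K z b d t hbd, Finsupp.add_apply]
  have h1 : (∑ τ' ∈ lcS K z b d,
      Finsupp.single (PCell.vert τ' (t τ')) (z τ')) (PCell.horiz ρ j) = 0 := by
    rw [Finsupp.finset_sum_apply]
    exact Finset.sum_eq_zero fun π _ => Finsupp.single_eq_of_ne (by simp)
  rw [h1, zero_add, Finsupp.finset_sum_apply]
  rw [Finset.sum_eq_single_of_mem ρ (Finset.mem_univ ρ)]
  · rw [Finsupp.finset_sum_apply]
    have : ∀ k ∈ Finset.Icc b (d-1),
        (Finsupp.single (PCell.horiz ρ k) (- lcT K z b d t (k+1) ρ)) (PCell.horiz ρ j)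
          = if k = j then - lcT K z b d t (k+1) ρ else 0 := by
      intro k _
      rw [Finsupp.single_apply]
      by_cases hkj : k = j
      · rw [if_pos (by rw [hkj]), if_pos hkj]
      · rw [if_neg (by simp [hkj]), if_neg hkj]
    rw [Finset.sum_congr rfl this, Finset.sum_ite_eq' (Finset.Icc b (d-1)) j]
  · intro π _ hne
    rw [Finsupp.finset_sum_apply]
    exact Finset.sum_eq_zero fun k _ => Finsupp.single_eq_of_ne' (by simp [hne])

lemma pbd_liftCycle (hbd : b < d) (ht : ValidTimes K z b d t) :
    pbd K (liftCycle K z d b 0 t) = vchain K (lcW K z b d) b := by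
  have hexp : pbd K (liftCycle K z d b 0 t)
      = (∑ τ' ∈ lcS K z b d, z τ' • pcellBd K (.vert τ' (t τ')))
        + ∑ π : K.Cell, ∑ k ∈ Finset.Icc b (d-1),
            (- lcT K z b d t (k+1) π) • pcellBd K (.horiz π k) := by
    rw [liftCycle_eq K z b d t hbd, pbd_eq, map_add, map_sum, map_sum]
    congr 1
    · exact Finset.sum_congr rfl fun x _ => chainHom_single _ _ _
    · refine Finset.sum_congr rfl fun π _ => ?_
      rw [map_sum]
      exact Finset.sum_congr rfl fun k _ => chainHom_single _ _ _
  rw [hexp]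
  ext y
  rw [Finsupp.add_apply, Finsupp.finset_sum_apply, Finsupp.finset_sum_apply]
  cases y with
  | vert ρ i =>
    have e1 : (∑ τ' ∈ lcS K z b d, (z τ' • pcellBd K (.vert τ' (t τ'))) (PCell.vert ρ i))
        = lcT K z b d t i ρ - lcT K z b d t (i+1) ρ := by
      rw [lcT_sub]
      refine Finset.sum_congr rfl fun τ' _ => ?_
      rw [Finsupp.smul_apply, pcellBd_vert_vert, smul_eq_mul, mul_ite, mul_zero]
      split_ifs
      all_goals try rfl
      all_goals (exfalso; omega)
    have e2 : (∑ π : K.Cell, (∑ k ∈ Finset.Icc b (d-1),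
          ((- lcT K z b d t (k+1) π) • pcellBd K (.horiz π k))) (PCell.vert ρ i))
        = (if b ≤ i-1 ∧ i-1 ≤ d-1 then - lcT K z b d t i ρ else 0)
          - (if b ≤ i ∧ i ≤ d-1 then - lcT K z b d t (i+1) ρ else 0) := by
      rw [Finset.sum_eq_single_of_mem ρ (Finset.mem_univ ρ)]
      · rw [Finsupp.finset_sum_apply]
        have : ∀ k ∈ Finset.Icc b (d-1),
            ((- lcT K z b d t (k+1) ρ) • pcellBd K (.horiz ρ k)) (PCell.vert ρ i)
              = (if k = i-1 then - lcT K z b d t (k+1) ρ else 0)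
                - (if k = i then - lcT K z b d t (k+1) ρ else 0) := by
          intro k _
          rw [Finsupp.smul_apply, pcellBd_horiz_vert, smul_eq_mul]
          have c1 : (k = i - 1) ↔ (ρ = ρ ∧ k + 1 = i) := by
            constructor
            · intro h; exact ⟨rfl, by omega⟩
            · rintro ⟨-, h⟩; omega
          have c2 : (k = i) ↔ (ρ = ρ ∧ k = i) := ⟨fun h => ⟨rfl, h⟩, fun h => h.2⟩
          rw [if_congr c1 rfl rfl, if_congr c2 rfl rfl]
          split_ifs <;> ring
        rw [Finset.sum_congr rfl this, Finset.sum_sub_distrib,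
          Finset.sum_ite_eq' (Finset.Icc b (d-1)) (i-1),
          Finset.sum_ite_eq' (Finset.Icc b (d-1)) i]
        have hii : i - 1 + 1 = i := by ring
        rw [hii]
        simp only [Finset.mem_Icc]
      · intro π _ hne
        rw [Finsupp.finset_sum_apply]
        refine Finset.sum_eq_zero fun k _ => ?_
        rw [Finsupp.smul_apply, pcellBd_horiz_vert]
        rw [if_neg (by simp [hne]), if_neg (by simp [hne]), sub_zero, smul_zero]
    rw [e1, e2, vchain_vert]
    have hWb : lcW K z b d ρ = lcT K z b d t b ρ := by
      rw [lcW_apply, lcT_full K z b d t ht le_rfl]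
    exact keyAlg b d i hbd (fun m => lcT K z b d t m ρ) (lcW K z b d ρ) hWb
      (fun m hm => by
        show lcT K z b d t m ρ = lcT K z b d t b ρ
        rw [lcT_full K z b d t ht hm, ← lcT_full K z b d t ht (le_refl b)])
      (fun m hm => lcT_zero K z b d t ht hm ρ)
  | horiz ρ j =>
    have e1 : (∑ τ' ∈ lcS K z b d, (z τ' • pcellBd K (.vert τ' (t τ'))) (PCell.horiz ρ j))
        = 0 := by
      refine Finset.sum_eq_zero fun τ' _ => ?_
      rw [Finsupp.smul_apply, pcellBd_vert_horiz, smul_zero]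
    have e2 : (∑ π : K.Cell, (∑ k ∈ Finset.Icc b (d-1),
          ((- lcT K z b d t (k+1) π) • pcellBd K (.horiz π k))) (PCell.horiz ρ j))
        = if j ∈ Finset.Icc b (d-1) then ∑ π : K.Cell, lcT K z b d t (j+1) π * K.bdry π ρ
          else 0 := by
      have hterm : ∀ π : K.Cell, (∑ k ∈ Finset.Icc b (d-1),
          ((- lcT K z b d t (k+1) π) • pcellBd K (.horiz π k))) (PCell.horiz ρ j)
            = if j ∈ Finset.Icc b (d-1) then lcT K z b d t (j+1) π * K.bdry π ρ else 0 := by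
        intro π
        rw [Finsupp.finset_sum_apply]
        have : ∀ k ∈ Finset.Icc b (d-1),
            ((- lcT K z b d t (k+1) π) • pcellBd K (.horiz π k)) (PCell.horiz ρ j)
              = if k = j then lcT K z b d t (k+1) π * K.bdry π ρ else 0 := by
          intro k _
          rw [Finsupp.smul_apply, pcellBd_horiz_horiz, smul_eq_mul]
          split_ifs with ha hb
          · ring
          · exfalso; omega
          · exfalso; omega
          · ring
        rw [Finset.sum_congr rfl this, Finset.sum_ite_eq' (Finset.Icc b (d-1)) j]
      rw [Finset.sum_congr rfl (fun π _ => hterm π)]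
      by_cases hj : j ∈ Finset.Icc b (d-1)
      · simp only [hj, if_true]
      · simp only [hj, if_false, Finset.sum_const_zero]
    rw [e1, e2, vchain_horiz, zero_add]
    by_cases hj : j ∈ Finset.Icc b (d-1)
    · rw [if_pos hj]
      calc ∑ π : K.Cell, lcT K z b d t (j+1) π * K.bdry π ρ
          = ∑ π : K.Cell, ∑ x ∈ z.support.filter
              (fun τ' => (K.tmin τ' ≤ d ∧ b ≤ K.tmax τ') ∧ j+1 ≤ t τ'),
              z x * K.bdry x π * K.bdry π ρ := by
            refine Finset.sum_congr rfl fun π _ => ?_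
            rw [lcT, Finset.sum_mul]
        _ = ∑ x ∈ z.support.filter
              (fun τ' => (K.tmin τ' ≤ d ∧ b ≤ K.tmax τ') ∧ j+1 ≤ t τ'),
              ∑ π : K.Cell, z x * K.bdry x π * K.bdry π ρ := Finset.sum_comm
        _ = 0 := by
            refine Finset.sum_eq_zero fun x _ => ?_
            have : ∀ π : K.Cell, z x * K.bdry x π * K.bdry π ρ
                = z x * (K.bdry x π * K.bdry π ρ) := fun π => by ring
            rw [Finset.sum_congr rfl (fun π _ => this π), ← Finset.mul_sum,
              bdry2_zero, mul_zero]
    · rw [if_neg hj]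

end Lift2

section Lift3
variable {F : Type} [Field F] {n : ℤ}
variable (K : DeltaComplex F n) (z : K.Cell →₀ F) (b d : ℤ) (t : K.Cell → ℤ)

lemma lcW_tmax (ρ : K.Cell) (h : lcW K z b d ρ ≠ 0) : b ≤ K.tmax ρ := by
  rw [lcW_apply] at h
  obtain ⟨x, hx, hne⟩ := Finset.exists_ne_zero_of_sum_ne_zero h
  obtain ⟨hz, h1, h2⟩ := mem_lcS K z b d hx
  have hb := right_ne_zero_of_mul hne
  have := (K.nest x ρ hb).2
  omega

lemma lcW_eq_bd (hsupp : ∀ x, z x ≠ 0 → K.tmin x ≤ d) (ρ : K.Cell)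
    (hρ : b ≤ K.tmin ρ) : lcW K z b d ρ = bd K z ρ := by
  rw [lcW_apply, bd_eq, chainHom_coeff, Finsupp.sum]
  apply Finset.sum_subset
  · exact Finset.filter_subset _ _
  · intro x hxs hxn
    by_cases hb : K.bdry x ρ = 0
    · rw [hb, mul_zero]
    · exfalso
      have hz := Finsupp.mem_support_iff.mp hxs
      have h1 := hsupp x hz
      have hnest := K.nest x ρ hb
      have h2 : ¬ (K.tmin x ≤ d ∧ b ≤ K.tmax x) := fun hc =>
        hxn (Finset.mem_filter.mpr ⟨hxs, hc⟩)
      have := K.tmin_lt_tmax x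
      omega

lemma lcW_tmin (hsupp : ∀ x, z x ≠ 0 → K.tmin x ≤ d)
    (hw : ∀ ρ, bd K z ρ ≠ 0 → K.tmin ρ ≤ b) (ρ : K.Cell)
    (h : lcW K z b d ρ ≠ 0) : K.tmin ρ ≤ b := by
  by_contra hc
  rw [lcW_eq_bd K z b d hsupp ρ (by omega)] at h
  exact hc (hw ρ h)

lemma suppOn_liftCycle (hbd : b < d) (hb0 : 0 ≤ b) (ht : ValidTimes K z b d t)
    (hW : ∀ ρ, lcW K z b d ρ ≠ 0 → K.tmin ρ ≤ b) :
    SuppOn (liftCycle K z d b 0 t) (inSub K (-1) d) := by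
  intro y hy
  cases y with
  | vert ρ i =>
      rw [zhat_vert K z b d t hbd] at hy
      by_cases hc : ρ ∈ lcS K z b d ∧ t ρ = i
      · obtain ⟨hρ, hti⟩ := hc
        obtain ⟨hz, h1, h2⟩ := mem_lcS K z b d hρ
        have := ht ρ hz h1 h2
        show (K.tmin ρ ≤ i ∧ i ≤ K.tmax ρ) ∧ -1 ≤ i ∧ i ≤ d
        omega
      · rw [if_neg hc] at hy
        exact absurd rfl hy
  | horiz ρ k =>
      rw [zhat_horiz K z b d t hbd] at hy
      by_cases hc : k ∈ Finset.Icc b (d-1)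
      · rw [if_pos hc] at hy
        rw [Finset.mem_Icc] at hc
        have hT : lcT K z b d t (k+1) ρ ≠ 0 := fun h0 => hy (by rw [h0, neg_zero])
        have hmax : k + 1 ≤ K.tmax ρ := by
          rw [lcT] at hT
          obtain ⟨x, hx, hne⟩ := Finset.exists_ne_zero_of_sum_ne_zero hT
          simp only [Finset.mem_filter, Finsupp.mem_support_iff] at hx
          have hb := right_ne_zero_of_mul hne
          have := (K.nest x ρ hb).2
          have := ht x hx.1 hx.2.1.1 hx.2.1.2
          omega
        have hmin : K.tmin ρ ≤ k := by
          by_contra hcc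
          have hfull := lcT_full_of_tmin K z b d t ht (m := k+1) ρ (by omega)
          rw [← lcW_apply] at hfull
          rw [hfull] at hT
          have := hW ρ hT
          omega
        show (K.tmin ρ ≤ k ∧ k + 1 ≤ K.tmax ρ) ∧ -1 ≤ k ∧ k + 1 ≤ d
        omega
      · rw [if_neg hc] at hy
        exact absurd rfl hy

lemma suppOn_pbd_liftCycle (hbd : b < d) (hb0 : 0 ≤ b) (ht : ValidTimes K z b d t)
    (hW : ∀ ρ, lcW K z b d ρ ≠ 0 → K.tmin ρ ≤ b) :
    SuppOn (pbd K (liftCycle K z d b 0 t)) (inSub K (-1) b) := by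
  rw [pbd_liftCycle K z b d t hbd ht]
  intro y hy
  cases y with
  | vert ρ i =>
      rw [vchain_vert] at hy
      by_cases hc : i = b
      · rw [if_pos hc] at hy
        have h1 := hW ρ hy
        have h2 := lcW_tmax K z b d ρ hy
        show (K.tmin ρ ≤ i ∧ i ≤ K.tmax ρ) ∧ -1 ≤ i ∧ i ≤ b
        omega
      · rw [if_neg hc] at hy
        exact absurd rfl hy
  | horiz ρ k =>
      rw [vchain_horiz] at hy
      exact absurd rfl hy

end Lift3

section Slice
variable {F : Type} [Field F] {n : ℤ}
variable (K : DeltaComplex F n)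

noncomputable def phiG (m : ℤ) : PCell K.Cell → (K.Cell →₀ F) := fun x =>
  match x with
  | .vert ρ i => if i = m then Finsupp.single ρ 1 else 0
  | .horiz _ _ => 0

noncomputable def psiG (m : ℤ) : PCell K.Cell → (K.Cell →₀ F) := fun x =>
  match x with
  | .vert _ _ => 0
  | .horiz ρ k => if k = m - 1 then Finsupp.single ρ 1 else 0

noncomputable def phi (m : ℤ) : (PCell K.Cell →₀ F) →ₗ[F] (K.Cell →₀ F) :=
  chainHom (phiG K m)

noncomputable def psi (m : ℤ) : (PCell K.Cell →₀ F) →ₗ[F] (K.Cell →₀ F) :=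
  chainHom (psiG K m)

lemma phi_apply (m : ℤ) (c : PCell K.Cell →₀ F) (ρ : K.Cell) :
    phi K m c ρ = c (.vert ρ m) := by
  rw [phi, chainHom_coeff, Finsupp.sum]
  rw [Finset.sum_eq_single (PCell.vert ρ m)]
  · simp [phiG]
  · intro y hy hne
    cases y with
    | vert π i =>
        by_cases him : i = m
        · subst him
          have : π ≠ ρ := fun h => hne (by rw [h])
          simp [phiG, Finsupp.single_eq_of_ne' this]
        · simp [phiG, him]
    | horiz π k => simp [phiG]
  · intro h
    rw [Finsupp.notMem_support_iff.mp h, zero_mul]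

lemma psi_apply (m : ℤ) (c : PCell K.Cell →₀ F) (ρ : K.Cell) :
    psi K m c ρ = c (.horiz ρ (m-1)) := by
  rw [psi, chainHom_coeff, Finsupp.sum]
  rw [Finset.sum_eq_single (PCell.horiz ρ (m-1))]
  · simp [psiG]
  · intro y hy hne
    cases y with
    | vert π i => simp [psiG]
    | horiz π k =>
        by_cases hkm : k = m - 1
        · subst hkm
          have : π ≠ ρ := fun h => hne (by rw [h])
          simp [psiG, Finsupp.single_eq_of_ne' this]
        · simp [psiG, hkm]
  · intro h
    rw [Finsupp.notMem_support_iff.mp h, zero_mul]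

lemma phi_zero (m : ℤ) (c : PCell K.Cell →₀ F) (h : ∀ ρ, c (.vert ρ m) = 0) :
    phi K m c = 0 := by
  ext ρ
  rw [phi_apply, h, Finsupp.coe_zero, Pi.zero_apply]

lemma phi_vchain (w : K.Cell →₀ F) (m : ℤ) : phi K m (vchain K w m) = w := by
  ext ρ
  rw [phi_apply, vchain_vert, if_pos rfl]

lemma phiG_vert (m : ℤ) (π : K.Cell) (j : ℤ) :
    phiG K m (.vert π j) = if j = m then Finsupp.single π (1:F) else 0 := rfl

lemma phiG_horiz (m : ℤ) (π : K.Cell) (k : ℤ) : phiG K m (.horiz π k) = 0 := rfl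

lemma psiG_vert (m : ℤ) (π : K.Cell) (j : ℤ) : psiG K m (.vert π j) = 0 := rfl

lemma psiG_horiz (m : ℤ) (π : K.Cell) (k : ℤ) :
    psiG K m (.horiz π k) = if k = m - 1 then Finsupp.single π (1:F) else 0 := rfl

lemma phi_single (m : ℤ) (x : PCell K.Cell) (a : F) :
    phi K m (Finsupp.single x a) = a • phiG K m x := chainHom_single _ _ _

lemma psi_single (m : ℤ) (x : PCell K.Cell) (a : F) :
    psi K m (Finsupp.single x a) = a • psiG K m x := chainHom_single _ _ _

lemma sum_smul_single (w : K.Cell →₀ F) :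
    (w.sum fun σ s => s • Finsupp.single σ (1:F)) = w := by
  calc w.sum (fun σ s => s • Finsupp.single σ (1:F))
      = w.sum fun σ s => Finsupp.single σ s := by
        refine Finsupp.sum_congr fun σ _ => ?_
        rw [Finsupp.smul_single, smul_eq_mul, mul_one]
    _ = w := Finsupp.sum_single w

lemma phi_pbd (m : ℤ) (c : PCell K.Cell →₀ F) (hc : SuppOn c (inSub K (-1) m)) :
    phi K m (pbd K c) = bd K (phi K m c) + psi K m c := by
  have hdecomp : c = ∑ x ∈ c.support, Finsupp.single x (c x) := by
    conv_lhs => rw [← Finsupp.sum_single c]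
    rfl
  have hc1 : ∀ x ∈ c.support, phi K m (pbd K (Finsupp.single x (c x)))
      = bd K (phi K m (Finsupp.single x (c x))) + psi K m (Finsupp.single x (c x)) := by
    intro x hx
    have hins := hc x (Finsupp.mem_support_iff.mp hx)
    cases x with
    | vert π j =>
      have hj : j ≤ m := hins.2.2
      rw [pbd_eq, chainHom_single, map_smul]
      have hphig : phi K m (pcellBd K (.vert π j)) = if j = m then K.bdry π else 0 := by
        show phi K m ((K.bdry π).sum fun σ a => Finsupp.single (PCell.vert σ j) a) = _
        rw [phi, chainHom_mapD]
        by_cases hjm : j = m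
        · subst hjm
          rw [if_pos rfl]
          calc ((K.bdry π).sum fun σ s => s • phiG K j (PCell.vert σ j))
              = (K.bdry π).sum fun σ s => s • Finsupp.single σ (1:F) := by
                refine Finsupp.sum_congr fun σ _ => ?_
                rw [phiG_vert, if_pos rfl]
            _ = K.bdry π := sum_smul_single K _
        · rw [if_neg hjm]
          calc ((K.bdry π).sum fun σ s => s • phiG K m (PCell.vert σ j))
              = (K.bdry π).sum fun _ _ => (0 : K.Cell →₀ F) := by
                refine Finsupp.sum_congr fun σ _ => ?_
                rw [phiG_vert, if_neg hjm, smul_zero]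
            _ = 0 := Finset.sum_const_zero
      rw [hphig, phi_single, psi_single, psiG_vert, smul_zero, add_zero, phiG_vert]
      by_cases hjm : j = m
      · rw [if_pos hjm, if_pos hjm, bd_eq, map_smul, chainHom_single, one_smul]
      · rw [if_neg hjm, if_neg hjm, smul_zero, bd_eq, map_zero]
    | horiz π k =>
      have hk : k + 1 ≤ m := hins.2.2
      rw [pbd_eq, chainHom_single, map_smul]
      have hphig : phi K m (pcellBd K (.horiz π k))
          = if k + 1 = m then Finsupp.single π (1:F) else 0 := by
        show phi K m (Finsupp.single (PCell.vert π (k+1)) 1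
          - Finsupp.single (PCell.vert π k) 1
          - (K.bdry π).sum (fun ρ a => Finsupp.single (PCell.horiz ρ k) a)) = _
        rw [map_sub, map_sub, phi_single, phi_single, phi, chainHom_mapD]
        rw [phiG_vert, phiG_vert, one_smul, one_smul]
        have h0 : ((K.bdry π).sum fun σ s => s • phiG K m (PCell.horiz σ k)) = 0 := by
          calc ((K.bdry π).sum fun σ s => s • phiG K m (PCell.horiz σ k))
              = (K.bdry π).sum fun _ _ => (0 : K.Cell →₀ F) := by
                refine Finsupp.sum_congr fun σ _ => ?_
                rw [phiG_horiz, smul_zero]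
            _ = 0 := Finset.sum_const_zero
        rw [h0, sub_zero, if_neg (show ¬ (k = m) by omega), sub_zero]
      rw [hphig, phi_single, psi_single, phiG_horiz, psiG_horiz, smul_zero, bd_eq,
        map_zero, zero_add]
      have hiff : (k + 1 = m) ↔ (k = m - 1) := by omega
      rw [if_congr hiff rfl rfl]
  calc phi K m (pbd K c)
      = ∑ x ∈ c.support, phi K m (pbd K (Finsupp.single x (c x))) := by
        conv_lhs => rw [hdecomp]
        rw [pbd_eq, map_sum, map_sum]
        exact Finset.sum_congr rfl fun x _ => by rw [pbd_eq]
    _ = ∑ x ∈ c.support, (bd K (phi K m (Finsupp.single x (c x)))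
          + psi K m (Finsupp.single x (c x))) := Finset.sum_congr rfl hc1
    _ = bd K (phi K m c) + psi K m c := by
        rw [Finset.sum_add_distrib]
        congr 1
        · calc ∑ x ∈ c.support, bd K (phi K m (Finsupp.single x (c x)))
              = ∑ x ∈ c.support, chainHom K.bdry (phi K m (Finsupp.single x (c x))) :=
                Finset.sum_congr rfl fun x _ => bd_eq K _
            _ = chainHom K.bdry (phi K m (∑ x ∈ c.support, Finsupp.single x (c x))) := by
                rw [map_sum (phi K m), map_sum (chainHom K.bdry)]
            _ = bd K (phi K m c) := by rw [← hdecomp, ← bd_eq]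
        · rw [← map_sum (psi K m), ← hdecomp]

end Slice

section Reduce
variable {F : Type} [Field F] {n : ℤ}
variable (K : DeltaComplex F n) (O : ConeOrder K)
variable (R V : CCell K.Cell → (CCell K.Cell →₀ F))

set_option maxHeartbeats 800000 in
lemma expandV (hRV : IsReduction K O R V) :
    ∀ N : ℕ, ∀ c : CCell K.Cell →₀ F, (∀ y, c y ≠ 0 → O.pos y < N) →
      ∃ a : CCell K.Cell →₀ F, (∀ x, a x ≠ 0 → O.pos x < N)
        ∧ c = a.sum fun x s => s • V x := by
  intro N
  induction N with
  | zero =>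
      intro c hcb
      have hc0 : c = 0 := by
        ext y
        rcases eq_or_ne (c y) 0 with h | h
        · simp [h]
        · exact absurd (hcb y h) (by omega)
      refine ⟨0, by simp, ?_⟩
      rw [hc0, Finsupp.sum_zero_index]
  | succ N ih =>
      intro c hcb
      by_cases hN : ∃ y, c y ≠ 0 ∧ O.pos y = N
      · obtain ⟨y, hy, hyN⟩ := hN
        set s0 := c y / (V y) y with hs0
        have hc' : ∀ ρ, (c - s0 • V y) ρ ≠ 0 → O.pos ρ < N := by
          intro ρ hρ
          have hρy : ρ ≠ y := by
            intro h; subst h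
            apply hρ
            rw [Finsupp.sub_apply, Finsupp.smul_apply, smul_eq_mul, hs0,
              div_mul_cancel₀ _ (hRV.diag ρ), sub_self]
          have h1 : c ρ ≠ 0 ∨ (V y) ρ ≠ 0 := by
            by_contra hcon
            push_neg at hcon
            apply hρ
            rw [Finsupp.sub_apply, Finsupp.smul_apply, hcon.1, hcon.2, smul_zero, sub_zero]
          have hle : O.pos ρ < N + 1 := by
            rcases h1 with h | h
            · exact hcb ρ h
            · have := hRV.upper y ρ h
              omega
          have hne : O.pos ρ ≠ N := fun h => hρy (O.inj (by rw [h, hyN]))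
          omega
        obtain ⟨a, ha, hsum⟩ := ih (c - s0 • V y) hc'
        refine ⟨a + Finsupp.single y s0, ?_, ?_⟩
        · intro x hx
          rcases eq_or_ne x y with rfl | hxy
          · omega
          · have hax : a x ≠ 0 := by
              rw [Finsupp.add_apply, Finsupp.single_eq_of_ne' (Ne.symm hxy), add_zero] at hx
              exact hx
            have := ha x hax
            omega
        · rw [Finsupp.sum_add_index' (f := a) (g := Finsupp.single y s0)
            (h := fun x s => s • V x) (fun _ => zero_smul F _)
            (fun x s1 s2 => add_smul s1 s2 (V x))]
          rw [Finsupp.sum_single_index (h := fun x s => s • V x) (zero_smul F (V y))]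
          rw [← hsum]
          rw [sub_add_cancel]
      · push_neg at hN
        obtain ⟨a, ha, hsum⟩ := ih c (fun y hy => by have := hcb y hy; have := hN y hy; omega)
        exact ⟨a, fun x hx => by have := ha x hx; omega, hsum⟩

lemma exists_low (c : CCell K.Cell →₀ F) (hc : c ≠ 0) : ∃ y, IsLow K O c y := by
  have hsupp : c.support.Nonempty := Finsupp.support_nonempty_iff.mpr hc
  obtain ⟨y, hy, hmax⟩ := Finset.exists_max_image c.support O.pos hsupp
  exact ⟨y, Finsupp.mem_support_iff.mp hy,
    fun ρ hρ => hmax ρ (Finsupp.mem_support_iff.mpr hρ)⟩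

noncomputable def lowc (c : CCell K.Cell →₀ F) : CCell K.Cell :=
  if h : ∃ y, IsLow K O c y then h.choose else CCell.omega

lemma lowc_spec {c : CCell K.Cell →₀ F} (hc : c ≠ 0) : IsLow K O c (lowc K O c) := by
  have h : ∃ y, IsLow K O c y := exists_low K O c hc
  rw [lowc, dif_pos h]
  exact h.choose_spec

lemma low_unique {c : CCell K.Cell →₀ F} {y y' : CCell K.Cell}
    (h : IsLow K O c y) (h' : IsLow K O c y') : y = y' :=
  O.inj (le_antisymm (h'.2 y h.1) (h.2 y' h'.1))

lemma maxlow (hRV : IsReduction K O R V) (a : CCell K.Cell →₀ F)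
    (hS : ∃ x, a x ≠ 0 ∧ R x ≠ 0) :
    ∃ x₀, a x₀ ≠ 0 ∧ R x₀ ≠ 0
      ∧ IsLow K O (a.sum fun x s => s • R x) (lowc K O (R x₀))
      ∧ IsLow K O (R x₀) (lowc K O (R x₀)) := by
  set S := a.support.filter (fun x => R x ≠ 0) with hSdef
  have hSne : S.Nonempty := by
    obtain ⟨x, hx1, hx2⟩ := hS
    exact ⟨x, Finset.mem_filter.mpr ⟨Finsupp.mem_support_iff.mpr hx1, hx2⟩⟩
  obtain ⟨x₀, hx₀S, hmax⟩ :=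
    Finset.exists_max_image S (fun x => O.pos (lowc K O (R x))) hSne
  obtain ⟨hx₀a, hx₀R⟩ : a x₀ ≠ 0 ∧ R x₀ ≠ 0 := by
    have := Finset.mem_filter.mp hx₀S
    exact ⟨Finsupp.mem_support_iff.mp this.1, this.2⟩
  have hy₀ : IsLow K O (R x₀) (lowc K O (R x₀)) := lowc_spec K O hx₀R
  set y₀ := lowc K O (R x₀) with hy₀def
  have hcoeff : (a.sum fun x s => s • R x) y₀ = a x₀ * (R x₀) y₀ := by
    rw [Finsupp.sum_apply, Finsupp.sum]
    rw [Finset.sum_eq_single x₀]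
    · rw [Finsupp.smul_apply, smul_eq_mul]
    · intro x hx hne
      rw [Finsupp.smul_apply, smul_eq_mul]
      by_cases hR : R x = 0
      · rw [hR]
        simp
      · by_cases hRy : (R x) y₀ = 0
        · rw [hRy, mul_zero]
        · exfalso
          have hxS : x ∈ S := Finset.mem_filter.mpr ⟨hx, hR⟩
          have hlx : IsLow K O (R x) (lowc K O (R x)) := lowc_spec K O hR
          have h1 : O.pos y₀ ≤ O.pos (lowc K O (R x)) := hlx.2 y₀ hRy
          have h2 : O.pos (lowc K O (R x)) ≤ O.pos y₀ := hmax x hxS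
          have heq : lowc K O (R x) = y₀ := O.inj (le_antisymm h2 h1)
          exact hRV.reduced x x₀ y₀ hne (heq ▸ hlx) hy₀
    · intro hx
      simp [Finsupp.notMem_support_iff.mp hx]
  have hne0 : (a.sum fun x s => s • R x) y₀ ≠ 0 := by
    rw [hcoeff]
    exact mul_ne_zero hx₀a hy₀.1
  refine ⟨x₀, hx₀a, hx₀R, ⟨hne0, ?_⟩, hy₀⟩
  intro ρ hρ
  have hex : ∃ x ∈ a.support, (a x • R x) ρ ≠ 0 := by
    by_contra hcon
    push_neg at hcon
    apply hρ
    rw [Finsupp.sum_apply, Finsupp.sum]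
    exact Finset.sum_eq_zero fun x hx => hcon x hx
  obtain ⟨x, hxa, hxρ⟩ := hex
  have hRxρ : (R x) ρ ≠ 0 := fun h => hxρ (by rw [Finsupp.smul_apply, h, smul_zero])
  have hRx : R x ≠ 0 := fun h => hRxρ (by rw [h]; rfl)
  have hlx := lowc_spec K O (c := R x) hRx
  have h1 : O.pos ρ ≤ O.pos (lowc K O (R x)) := hlx.2 ρ hRxρ
  have h2 : O.pos (lowc K O (R x)) ≤ O.pos y₀ := hmax x (Finset.mem_filter.mpr ⟨hxa, hRx⟩)
  exact le_trans h1 h2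

end Reduce

/-- Claim (ordinary pairs lift to apex representatives): let `(σ,τ)` be a persistence pair
of base simplices in the cone filtration with `min σ = b < d = min τ` (`low R[τ] = σ`).
Then the chain `ẑ` produced by `Lift-Cycle(V[τ], (d,b), 0)` is a relative cycle of
`K̂(b,d]` and an apex representative: `[ẑ]` lies neither in the image of
`H(K̂(b-1,d]) → H(K̂(b,d])` nor in the image of `H(K̂(b,d-1]) → H(K̂(b,d])`. -/
theorem statement_13 {F : Type} [Field F] {n : ℤ} (K : DeltaComplex F n) (O : ConeOrder K)
    (R V : CCell K.Cell → (CCell K.Cell →₀ F)) (hRV : IsReduction K O R V)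
    (σ τ : K.Cell) (b d : ℤ) (hb : K.tmin σ = b) (hd : K.tmin τ = d) (hbd : b < d)
    (hlow : IsLow K O (R (CCell.base τ)) (CCell.base σ))
    (t : K.Cell → ℤ) (ht : ValidTimes K (basePart K (V (CCell.base τ))) b d t) :
    RelCycle K (inSub K (-1) d) (inSub K (-1) b)
      (liftCycle K (basePart K (V (CCell.base τ))) d b 0 t) ∧
    ¬ InImg K (inSub K (-1) d) (inSub K (-1) (b - 1))
        (inSub K (-1) d) (inSub K (-1) b)
        (liftCycle K (basePart K (V (CCell.base τ))) d b 0 t) ∧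
    ¬ InImg K (inSub K (-1) (d - 1)) (inSub K (-1) b)
        (inSub K (-1) d) (inSub K (-1) b)
        (liftCycle K (basePart K (V (CCell.base τ))) d b 0 t) := by
  set z := basePart K (V (CCell.base τ)) with hzdef
  have hb0 : 0 ≤ b := by have := K.tmin_nonneg σ; omega
  have hsuppz : ∀ x, z x ≠ 0 → K.tmin x ≤ d := by
    intro x hx
    have hVx : V (CCell.base τ) (CCell.base x) ≠ 0 := by
      rw [hzdef, basePart_apply] at hx
      exact hx
    have := tmin_le_of_pos_le K O (hRV.upper _ _ hVx)
    omega
  have hRbase : R (CCell.base τ) = baseLift K (bd K z) := Rcol_base K O R V hRV τ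
  have hwσ : bd K z σ ≠ 0 := by
    have h := hlow.1
    rw [hRbase, baseLift_base] at h
    exact h
  have hwtmin : ∀ ρ, bd K z ρ ≠ 0 → K.tmin ρ ≤ b := by
    intro ρ h
    have hRρ : R (CCell.base τ) (CCell.base ρ) ≠ 0 := by
      rw [hRbase, baseLift_base]
      exact h
    have := tmin_le_of_pos_le K O (hlow.2 _ hRρ)
    omega
  have hW : ∀ ρ, lcW K z b d ρ ≠ 0 → K.tmin ρ ≤ b := lcW_tmin K z b d hsuppz hwtmin
  have hkey : pbd K (liftCycle K z d b 0 t) = vchain K (lcW K z b d) b :=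
    pbd_liftCycle K z b d t hbd ht
  refine ⟨⟨suppOn_liftCycle K z b d t hbd hb0 ht hW,
    suppOn_pbd_liftCycle K z b d t hbd hb0 ht hW⟩, ?_, ?_⟩
  · -- not in the image of H(K̂(b-1,d]) → H(K̂(b,d])
    rintro ⟨α, β, γ, ⟨hαA, hαB⟩, hβ, hγ, heq⟩
    have heq2 : vchain K (lcW K z b d) b = pbd K α + pbd K γ := by
      rw [← hkey, heq, pbd_add K (α + pbd K β) γ, pbd_add K α (pbd K β), pbd_pbd,
        add_zero]
    have hphi : lcW K z b d = bd K (phi K b γ) + psi K b γ := by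
      have h1 : phi K b (vchain K (lcW K z b d) b) = lcW K z b d := phi_vchain K _ b
      have h2 : phi K b (pbd K α) = 0 := by
        refine phi_zero K b _ fun ρ => ?_
        by_contra h
        have h3 := hαB _ h
        have := h3.2.2
        omega
      have h3 : phi K b (pbd K γ) = bd K (phi K b γ) + psi K b γ := phi_pbd K b γ hγ
      calc lcW K z b d = phi K b (vchain K (lcW K z b d) b) := h1.symm
        _ = phi K b (pbd K α + pbd K γ) := by rw [← heq2]
        _ = phi K b (pbd K α) + phi K b (pbd K γ) := map_add _ _ _
        _ = bd K (phi K b γ) + psi K b γ := by rw [h2, h3, zero_add]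
    have hu : ∀ ρ, phi K b γ ρ ≠ 0 → K.tmin ρ ≤ b := by
      intro ρ h
      rw [phi_apply] at h
      exact (hγ _ h).1.1
    have hv : ∀ ρ, psi K b γ ρ ≠ 0 → K.tmin ρ ≤ b - 1 := by
      intro ρ h
      rw [psi_apply] at h
      exact (hγ _ h).1.1
    have hbdu : bd K (phi K b γ) = lcW K z b d - psi K b γ := by
      rw [hphi]
      abel
    have hc2 : cbd K (baseLift K (phi K b γ)) = baseLift K (lcW K z b d - psi K b γ) := by
      rw [cbd_baseLift, hbdu]
    have hvσ : psi K b γ σ = 0 := by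
      by_contra h
      have := hv σ h
      omega
    have hcoefσ : baseLift K (lcW K z b d - psi K b γ) (CCell.base σ) ≠ 0 := by
      rw [baseLift_base, Finsupp.sub_apply, hvσ, sub_zero,
        lcW_eq_bd K z b d hsuppz σ (by omega)]
      exact hwσ
    have hlow2 : IsLow K O (baseLift K (lcW K z b d - psi K b γ)) (CCell.base σ) := by
      refine ⟨hcoefσ, ?_⟩
      intro y hy
      cases y with
      | base ρ =>
          rw [baseLift_base, Finsupp.sub_apply] at hy
          by_cases hcase : K.tmin ρ < b
          · exact le_of_lt (O.base_lt_base ρ σ (by omega))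
          · have hvρ : psi K b γ ρ = 0 := by
              by_contra h
              have := hv ρ h
              omega
            have hWρ : lcW K z b d ρ ≠ 0 := by
              rw [hvρ, sub_zero] at hy
              exact hy
            have htρ : K.tmin ρ ≤ b := hW ρ hWρ
            rw [hvρ, sub_zero, lcW_eq_bd K z b d hsuppz ρ (by omega)] at hy
            have hRρ : R (CCell.base τ) (CCell.base ρ) ≠ 0 := by
              rw [hRbase, baseLift_base]
              exact hy
            exact hlow.2 _ hRρ
      | omega => rw [baseLift_omega] at hy; exact absurd rfl hy
      | cone ρ => rw [baseLift_cone] at hy; exact absurd rfl hy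
    have hub : ∀ y, baseLift K (phi K b γ) y ≠ 0 → O.pos y < O.pos (CCell.base τ) := by
      intro y hy
      cases y with
      | base ρ =>
          rw [baseLift_base] at hy
          have := hu ρ hy
          exact O.base_lt_base ρ τ (by omega)
      | omega => rw [baseLift_omega] at hy; exact absurd rfl hy
      | cone ρ => rw [baseLift_cone] at hy; exact absurd rfl hy
    obtain ⟨a, haB, hasum⟩ :=
      expandV K O R V hRV (O.pos (CCell.base τ)) (baseLift K (phi K b γ)) hub
    have hsumR : baseLift K (lcW K z b d - psi K b γ) = a.sum fun x s => s • R x := by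
      rw [← hc2, hasum, cbd_eq, map_finsuppSum]
      refine Finsupp.sum_congr fun x _ => ?_
      rw [map_smul, ← cbd_eq, ← hRV.rdv]
    have hex : ∃ x, a x ≠ 0 ∧ R x ≠ 0 := by
      have h := hcoefσ
      rw [hsumR, Finsupp.sum_apply, Finsupp.sum] at h
      obtain ⟨x, hx, hne⟩ := Finset.exists_ne_zero_of_sum_ne_zero h
      refine ⟨x, Finsupp.mem_support_iff.mp hx, ?_⟩
      intro h0
      apply hne
      rw [h0, smul_zero]
      rfl
    obtain ⟨x₀, hx₀a, hx₀R, hlowsum, hlowR⟩ := maxlow K O R V hRV a hex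
    have hy₀ : lowc K O (R x₀) = CCell.base σ := low_unique K O hlowsum (hsumR ▸ hlow2)
    have hx₀pos : O.pos x₀ < O.pos (CCell.base τ) := haB x₀ hx₀a
    have hx₀ne : x₀ ≠ CCell.base τ := by
      intro h
      rw [h] at hx₀pos
      omega
    exact hRV.reduced x₀ (CCell.base τ) (CCell.base σ) hx₀ne (hy₀ ▸ hlowR) hlow
  · -- not in the image of H(K̂(b,d-1]) → H(K̂(b,d])
    rintro ⟨α, β, γ, ⟨hαA, hαB⟩, hβ, hγ, heq⟩
    have hphiz : phi K d (liftCycle K z d b 0 t)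
        = z.filter (fun ρ => (K.tmin ρ ≤ d ∧ b ≤ K.tmax ρ) ∧ t ρ = d) := by
      ext ρ
      rw [phi_apply, zhat_vert K z b d t hbd, Finsupp.filter_apply]
      by_cases hz : z ρ = 0
      · split_ifs <;> simp [hz]
      · have hmem : (ρ ∈ lcS K z b d) ↔ (K.tmin ρ ≤ d ∧ b ≤ K.tmax ρ) := by
          simp [lcS, Finset.mem_filter, Finsupp.mem_support_iff, hz]
        by_cases hc : (K.tmin ρ ≤ d ∧ b ≤ K.tmax ρ) ∧ t ρ = d
        · rw [if_pos ⟨hmem.mpr hc.1, hc.2⟩, if_pos hc]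
        · rw [if_neg (fun hcc => hc ⟨hmem.mp hcc.1, hcc.2⟩), if_neg hc]
    have hrest : ∀ ρ,
        z.filter (fun ρ => ¬ ((K.tmin ρ ≤ d ∧ b ≤ K.tmax ρ) ∧ t ρ = d)) ρ ≠ 0 →
        K.tmin ρ ≤ d - 1 := by
      intro ρ h
      rw [Finsupp.filter_apply] at h
      by_cases hq : ¬ ((K.tmin ρ ≤ d ∧ b ≤ K.tmax ρ) ∧ t ρ = d)
      · rw [if_pos hq] at h
        have h1 := hsuppz ρ h
        by_cases h2 : b ≤ K.tmax ρ
        · have hts := ht ρ h h1 h2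
          have h3 : t ρ ≠ d := fun hteq => hq ⟨⟨h1, h2⟩, hteq⟩
          omega
        · have := K.tmin_lt_tmax ρ
          omega
      · rw [if_neg hq] at h
        exact absurd rfl h
    have hzsplit : z.filter (fun ρ => (K.tmin ρ ≤ d ∧ b ≤ K.tmax ρ) ∧ t ρ = d)
        + z.filter (fun ρ => ¬ ((K.tmin ρ ≤ d ∧ b ≤ K.tmax ρ) ∧ t ρ = d)) = z :=
      Finsupp.filter_pos_add_filter_neg z _
    have hphieq : z.filter (fun ρ => (K.tmin ρ ≤ d ∧ b ≤ K.tmax ρ) ∧ t ρ = d)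
        = bd K (phi K d β) + psi K d β := by
      have h0 : phi K d (liftCycle K z d b 0 t)
          = phi K d α + phi K d (pbd K β) + phi K d γ := by
        rw [heq, map_add, map_add]
      have hα0 : phi K d α = 0 := by
        refine phi_zero K d α fun ρ => ?_
        by_contra h
        have h3 := hαA _ h
        have := h3.2.2
        omega
      have hγ0 : phi K d γ = 0 := by
        refine phi_zero K d γ fun ρ => ?_
        by_contra h
        have h3 := hγ _ h
        have := h3.2.2
        omega
      have hβ2 := phi_pbd K d β hβ
      rw [hphiz] at h0
      rw [h0, hα0, hγ0, hβ2, zero_add, add_zero]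
    have hv' : ∀ ρ, psi K d β ρ ≠ 0 → K.tmin ρ ≤ d - 1 := by
      intro ρ h
      rw [psi_apply] at h
      exact (hβ _ h).1.1
    set v3 := z.filter (fun ρ => ¬ ((K.tmin ρ ≤ d ∧ b ≤ K.tmax ρ) ∧ t ρ = d))
      + psi K d β with hv3def
    have hbdu' : bd K (phi K d β) = z - v3 := by
      have hFpos : z.filter (fun ρ => (K.tmin ρ ≤ d ∧ b ≤ K.tmax ρ) ∧ t ρ = d)
          = z - z.filter (fun ρ => ¬ ((K.tmin ρ ≤ d ∧ b ≤ K.tmax ρ) ∧ t ρ = d)) :=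
        eq_sub_of_add_eq hzsplit
      calc bd K (phi K d β)
          = z.filter (fun ρ => (K.tmin ρ ≤ d ∧ b ≤ K.tmax ρ) ∧ t ρ = d) - psi K d β :=
            eq_sub_of_add_eq hphieq.symm
        _ = (z - z.filter (fun ρ => ¬ ((K.tmin ρ ≤ d ∧ b ≤ K.tmax ρ) ∧ t ρ = d)))
              - psi K d β := by rw [hFpos]
        _ = z - v3 := by rw [hv3def]; abel
    have hv3 : ∀ ρ, v3 ρ ≠ 0 → K.tmin ρ ≤ d - 1 := by
      intro ρ h
      rw [hv3def, Finsupp.add_apply] at h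
      by_cases h1 : z.filter (fun ρ => ¬ ((K.tmin ρ ≤ d ∧ b ≤ K.tmax ρ) ∧ t ρ = d)) ρ = 0
      · refine hv' ρ ?_
        rw [h1, zero_add] at h
        exact h
      · exact hrest ρ h1
    have hzτ : z τ ≠ 0 := by
      rw [hzdef, basePart_apply]
      exact hRV.diag _
    have hv3τ : v3 τ = 0 := by
      by_contra h
      have := hv3 τ h
      omega
    have hclow : IsLow K O (baseLift K (z - v3)) (CCell.base τ) := by
      constructor
      · rw [baseLift_base, Finsupp.sub_apply, hv3τ, sub_zero]
        exact hzτ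
      · intro y hy
        cases y with
        | base ρ =>
            rw [baseLift_base, Finsupp.sub_apply] at hy
            by_cases h1 : z ρ = 0
            · have h2 : v3 ρ ≠ 0 := by
                intro h3
                apply hy
                rw [h1, h3, sub_zero]
              have := hv3 ρ h2
              exact le_of_lt (O.base_lt_base ρ τ (by omega))
            · have hVρ : V (CCell.base τ) (CCell.base ρ) ≠ 0 := by
                rw [hzdef, basePart_apply] at h1
                exact h1
              exact hRV.upper _ _ hVρ
        | omega => rw [baseLift_omega] at hy; exact absurd rfl hy
        | cone ρ => rw [baseLift_cone] at hy; exact absurd rfl hy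
    have hub' : ∀ y, baseLift K (phi K d β) y ≠ 0 →
        O.pos y < O.pos (CCell.omega : CCell K.Cell) := by
      intro y hy
      cases y with
      | base ρ => exact O.base_lt_omega ρ
      | omega => rw [baseLift_omega] at hy; exact absurd rfl hy
      | cone ρ => rw [baseLift_cone] at hy; exact absurd rfl hy
    obtain ⟨a, haB, hasum⟩ :=
      expandV K O R V hRV (O.pos (CCell.omega : CCell K.Cell)) (baseLift K (phi K d β)) hub'
    have haBase : ∀ x, a x ≠ 0 → ∃ ρx, x = CCell.base ρx := by
      intro x hx
      have hpos := haB x hx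
      cases x with
      | base ρx => exact ⟨ρx, rfl⟩
      | omega => omega
      | cone ρx =>
          have := O.omega_lt_cone ρx
          omega
    have hsumR : baseLift K (z - v3) = a.sum fun x s => s • R x := by
      calc baseLift K (z - v3) = baseLift K (bd K (phi K d β)) := by rw [hbdu']
        _ = cbd K (baseLift K (phi K d β)) := (cbd_baseLift K _).symm
        _ = a.sum fun x s => s • R x := by
            rw [hasum, cbd_eq, map_finsuppSum]
            refine Finsupp.sum_congr fun x _ => ?_
            rw [map_smul, ← cbd_eq, ← hRV.rdv]
    have hex : ∃ x, a x ≠ 0 ∧ R x ≠ 0 := by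
      have h := hclow.1
      rw [hsumR, Finsupp.sum_apply, Finsupp.sum] at h
      obtain ⟨x, hx, hne⟩ := Finset.exists_ne_zero_of_sum_ne_zero h
      refine ⟨x, Finsupp.mem_support_iff.mp hx, ?_⟩
      intro h0
      apply hne
      rw [h0, smul_zero]
      rfl
    obtain ⟨x₀, hx₀a, hx₀R, hlowsum, hlowR⟩ := maxlow K O R V hRV a hex
    have hy₀ : lowc K O (R x₀) = CCell.base τ := low_unique K O hlowsum (hsumR ▸ hclow)
    obtain ⟨τ₀, rfl⟩ := haBase x₀ hx₀a
    have hR0 : R (CCell.base τ₀) = baseLift K (bd K (basePart K (V (CCell.base τ₀)))) :=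
      Rcol_base K O R V hRV τ₀
    have hlowR' : IsLow K O (R (CCell.base τ₀)) (CCell.base τ) := hy₀ ▸ hlowR
    have hub2 : ∀ y, R (CCell.base τ₀) y ≠ 0 → O.pos y < O.pos (CCell.base τ) + 1 := by
      intro y hy
      have := hlowR'.2 y hy
      omega
    obtain ⟨a', haB', hasum'⟩ :=
      expandV K O R V hRV (O.pos (CCell.base τ) + 1) (R (CCell.base τ₀)) hub2
    have hcoef : R (CCell.base τ₀) (CCell.base τ)
        = a' (CCell.base τ) * (V (CCell.base τ)) (CCell.base τ) := by
      conv_lhs => rw [hasum']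
      rw [Finsupp.sum_apply, Finsupp.sum]
      rw [Finset.sum_eq_single (CCell.base τ)]
      · rw [Finsupp.smul_apply, smul_eq_mul]
      · intro x hxs hxne
        rw [Finsupp.smul_apply, smul_eq_mul]
        by_cases hVx : (V x) (CCell.base τ) = 0
        · rw [hVx, mul_zero]
        · exfalso
          have h1 := hRV.upper x _ hVx
          have h2 := haB' x (Finsupp.mem_support_iff.mp hxs)
          exact hxne (O.inj (by omega))
      · intro hxs
        simp [Finsupp.notMem_support_iff.mp hxs]
    have ha'τ : a' (CCell.base τ) ≠ 0 := by
      intro h0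
      apply hlowR'.1
      rw [hcoef, h0, zero_mul]
    have hcyc : cbd K (R (CCell.base τ₀)) = 0 := by
      rw [hR0, cbd_baseLift, bd_bd]
      ext y
      rcases y with ρ | _ | ρ
      · rw [baseLift_base]; rfl
      · rw [baseLift_omega]; rfl
      · rw [baseLift_cone]; rfl
    have hzero : (a'.sum fun x s => s • R x) = 0 := by
      calc (a'.sum fun x s => s • R x) = cbd K (R (CCell.base τ₀)) := by
            conv_rhs => rw [hasum']
            rw [cbd_eq, map_finsuppSum]
            exact (Finsupp.sum_congr fun x _ => by rw [map_smul, ← cbd_eq, ← hRV.rdv]).symm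
        _ = 0 := hcyc
    have hex2 : ∃ x, a' x ≠ 0 ∧ R x ≠ 0 :=
      ⟨CCell.base τ, ha'τ, fun h => hlow.1 (by rw [h]; rfl)⟩
    obtain ⟨x₁, hx₁a, hx₁R, hlowsum2, hlowR2⟩ := maxlow K O R V hRV a' hex2
    rw [hzero] at hlowsum2
    exact hlowsum2.1 rfl
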